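/- arXiv:math/0012027 — 5 statements merged into one kernel-verified Lean document; each statement's English description precedes it below -/
import Mathlib

section
/- (Theorem 3.1, forward direction, for the Euclidean metric.) Let λ ≠ 0 be real, U ⊆ ℝ³ open, and A : U → ℝ³ twice continuously differentiable with ‖A(p)‖ = 1 and curl A(p) = 2λ A(p) for all p ∈ U (i.e. the dual 1-form α satisfies the adaptedness condition dα = 2λ∗α, |α| = 1). Then: (i) (D A)(p)(A(p)) = 0 for all p, so the congruence of integral curves of A is geodesic; (ii) div A = 0 on U, so the congruence is divergence-free; and (iii) ‖curl A(p)‖ = 2|λ| for all p, so the twist of the congruence is the nonzero constant |λ|. -/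
noncomputable section

/-- ℝ³ with the Euclidean metric. -/
abbrev E3 := EuclideanSpace ℝ (Fin 3)

/-- The `i`-th component of a vector field on `E3`. -/
def comp3 (A : E3 → E3) (i : Fin 3) (p : E3) : ℝ := (WithLp.equiv 2 (Fin 3 → ℝ)) (A p) i

/-- Partial derivative in the `i`-th coordinate direction. -/
def pd3 (i : Fin 3) (f : E3 → ℝ) (p : E3) : ℝ := fderiv ℝ f p (EuclideanSpace.single i 1)

/-- The curl of a vector field on Euclidean ℝ³. -/
def curl3 (A : E3 → E3) (p : E3) : E3 :=
  (WithLp.equiv 2 (Fin 3 → ℝ)).symm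
    ![pd3 1 (comp3 A 2) p - pd3 2 (comp3 A 1) p,
      pd3 2 (comp3 A 0) p - pd3 0 (comp3 A 2) p,
      pd3 0 (comp3 A 1) p - pd3 1 (comp3 A 0) p]

/-- The divergence of a vector field on Euclidean ℝ³. -/
def div3 (A : E3 → E3) (p : E3) : ℝ :=
  pd3 0 (comp3 A 0) p + pd3 1 (comp3 A 1) p + pd3 2 (comp3 A 2) p

lemma e3_decomp (v : E3) : v = EuclideanSpace.proj 0 v • EuclideanSpace.single (0:Fin 3) (1:ℝ)
    + EuclideanSpace.proj 1 v • EuclideanSpace.single 1 1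
    + EuclideanSpace.proj 2 v • EuclideanSpace.single 2 1 := by
  ext i
  fin_cases i <;>
    simp [PiLp.add_apply, PiLp.smul_apply, EuclideanSpace.single_apply,
      PiLp.proj_apply, Fin.ext_iff]

lemma fderiv_apply3 (g : E3 → ℝ) (p v : E3) :
    fderiv ℝ g p v = EuclideanSpace.proj 0 v * pd3 0 g p
      + EuclideanSpace.proj 1 v * pd3 1 g p + EuclideanSpace.proj 2 v * pd3 2 g p := by
  conv_lhs => rw [e3_decomp v]
  simp [pd3, map_add, map_smul, smul_eq_mul]

lemma pd3_deriv_eq {g : E3 → ℝ} {p : E3} (hg : DifferentiableAt ℝ (fderiv ℝ g) p) (i j : Fin 3) :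
    pd3 i (pd3 j g) p
      = fderiv ℝ (fderiv ℝ g) p (EuclideanSpace.single i 1) (EuclideanSpace.single j 1) := by
  have h : HasFDerivAt (fun q => fderiv ℝ g q (EuclideanSpace.single j 1))
      ((ContinuousLinearMap.apply ℝ ℝ (EuclideanSpace.single j 1)).comp
        (fderiv ℝ (fderiv ℝ g) p)) p := by
    exact (ContinuousLinearMap.apply ℝ ℝ (EuclideanSpace.single j 1)).hasFDerivAt.comp p
      hg.hasFDerivAt
  have h2 : pd3 j g = fun q => fderiv ℝ g q (EuclideanSpace.single j 1) := rfl
  rw [pd3, h2, h.fderiv]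
  rfl

lemma pd3_symm {g : E3 → ℝ} {p : E3} (hg : ContDiffAt ℝ 2 g p) (i j : Fin 3) :
    pd3 i (pd3 j g) p = pd3 j (pd3 i g) p := by
  have hd : DifferentiableAt ℝ (fderiv ℝ g) p := by
    have : ContDiffAt ℝ 1 (fderiv ℝ g) p := hg.fderiv_right (by norm_num)
    exact this.differentiableAt one_ne_zero
  rw [pd3_deriv_eq hd, pd3_deriv_eq hd]
  exact (hg.isSymmSndFDerivAt (by simp [minSmoothness_of_isRCLikeNormedField])) _ _

/-- Theorem 3.1, forward direction, for the Euclidean metric: a unit vector field dual to an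
adapted contact form (`curl A = 2λA`) has geodesic, divergence-free integral curves of constant
nonzero twist `|λ|`. -/
theorem stmt3 (lam : ℝ) (hlam : lam ≠ 0) (U : Set E3) (hU : IsOpen U) (A : E3 → E3)
    (hC2 : ContDiffOn ℝ 2 A U)
    (hunit : ∀ p ∈ U, ‖A p‖ = 1)
    (hadapted : ∀ p ∈ U, curl3 A p = (2 * lam) • A p) :
    (∀ p ∈ U, fderiv ℝ A p (A p) = 0) ∧
    (∀ p ∈ U, div3 A p = 0) ∧
    (∀ p ∈ U, ‖curl3 A p‖ = 2 * |lam|) := by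
  -- basic regularity facts
  have hcomp : ∀ i : Fin 3, ContDiffOn ℝ 2 (comp3 A i) U := fun i =>
    (EuclideanSpace.proj i : E3 →L[ℝ] ℝ).contDiff.comp_contDiffOn hC2
  have hcompAt : ∀ i : Fin 3, ∀ p ∈ U, ContDiffAt ℝ 2 (comp3 A i) p := fun i p hp =>
    (hcomp i p hp).contDiffAt (hU.mem_nhds hp)
  have hdiffAt : ∀ i : Fin 3, ∀ p ∈ U, DifferentiableAt ℝ (comp3 A i) p := fun i p hp =>
    (hcompAt i p hp).differentiableAt two_ne_zero
  -- the curl equations in components, on U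
  have hcurlc : ∀ p ∈ U,
      (pd3 1 (comp3 A 2) p - pd3 2 (comp3 A 1) p = 2 * lam * comp3 A 0 p) ∧
      (pd3 2 (comp3 A 0) p - pd3 0 (comp3 A 2) p = 2 * lam * comp3 A 1 p) ∧
      (pd3 0 (comp3 A 1) p - pd3 1 (comp3 A 0) p = 2 * lam * comp3 A 2 p) := by
    intro p hp
    have h := hadapted p hp
    refine ⟨?_, ?_, ?_⟩
    · have := congrArg (fun v : E3 => (WithLp.equiv 2 (Fin 3 → ℝ)) v 0) h
      simpa [curl3, comp3] using this
    · have := congrArg (fun v : E3 => (WithLp.equiv 2 (Fin 3 → ℝ)) v 1) h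
      simpa [curl3, comp3] using this
    · have := congrArg (fun v : E3 => (WithLp.equiv 2 (Fin 3 → ℝ)) v 2) h
      simpa [curl3, comp3] using this
  -- the unit condition in components, on U
  have hS : ∀ p ∈ U, comp3 A 0 p * comp3 A 0 p + comp3 A 1 p * comp3 A 1 p
      + comp3 A 2 p * comp3 A 2 p = 1 := by
    intro p hp
    have h2 : (inner ℝ (A p) (A p) : ℝ) = 1 := by
      rw [real_inner_self_eq_norm_sq, hunit p hp]; norm_num
    rw [PiLp.inner_apply] at h2
    simp only [RCLike.inner_apply, starRingEnd_apply, star_trivial] at h2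
    rw [Fin.sum_univ_three] at h2
    exact h2
  -- derivative of the unit condition
  have hUnitD : ∀ p ∈ U, ∀ i : Fin 3,
      comp3 A 0 p * pd3 i (comp3 A 0) p + comp3 A 1 p * pd3 i (comp3 A 1) p
        + comp3 A 2 p * pd3 i (comp3 A 2) p = 0 := by
    intro p hp i
    have h0 := ((hdiffAt 0 p hp).hasFDerivAt).mul ((hdiffAt 0 p hp).hasFDerivAt)
    have h1 := ((hdiffAt 1 p hp).hasFDerivAt).mul ((hdiffAt 1 p hp).hasFDerivAt)
    have h2 := ((hdiffAt 2 p hp).hasFDerivAt).mul ((hdiffAt 2 p hp).hasFDerivAt)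
    have hSf : HasFDerivAt (fun q => comp3 A 0 q * comp3 A 0 q + comp3 A 1 q * comp3 A 1 q
        + comp3 A 2 q * comp3 A 2 q)
        ((comp3 A 0 p • fderiv ℝ (comp3 A 0) p + comp3 A 0 p • fderiv ℝ (comp3 A 0) p)
          + (comp3 A 1 p • fderiv ℝ (comp3 A 1) p + comp3 A 1 p • fderiv ℝ (comp3 A 1) p)
          + (comp3 A 2 p • fderiv ℝ (comp3 A 2) p + comp3 A 2 p • fderiv ℝ (comp3 A 2) p)) p :=
      HasFDerivAt.add (HasFDerivAt.add h0 h1) h2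
    have hev : (fun q => comp3 A 0 q * comp3 A 0 q + comp3 A 1 q * comp3 A 1 q
        + comp3 A 2 q * comp3 A 2 q) =ᶠ[nhds p] (fun _ => (1:ℝ)) := by
      filter_upwards [hU.mem_nhds hp] with q hq using hS q hq
    have hzero : fderiv ℝ (fun q => comp3 A 0 q * comp3 A 0 q + comp3 A 1 q * comp3 A 1 q
        + comp3 A 2 q * comp3 A 2 q) p = 0 := by
      rw [hev.fderiv_eq]; exact fderiv_const_apply 1
    rw [hSf.fderiv] at hzero
    have := congrArg (fun L : E3 →L[ℝ] ℝ => L (EuclideanSpace.single i 1)) hzero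
    simp only [ContinuousLinearMap.add_apply, ContinuousLinearMap.smul_apply,
      ContinuousLinearMap.zero_apply, smul_eq_mul] at this
    have hpd : ∀ j : Fin 3, fderiv ℝ (comp3 A j) p (EuclideanSpace.single i 1)
        = pd3 i (comp3 A j) p := fun j => rfl
    rw [hpd 0, hpd 1, hpd 2] at this
    linarith
  -- differentiability of the first partial derivatives
  have hpdDiff : ∀ (j k : Fin 3), ∀ p ∈ U, DifferentiableAt ℝ (pd3 j (comp3 A k)) p := by
    intro j k p hp
    have h1 : ContDiffAt ℝ 1 (fderiv ℝ (comp3 A k)) p :=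
      (hcompAt k p hp).fderiv_right (by norm_num)
    have hd := h1.differentiableAt one_ne_zero
    have h : HasFDerivAt (fun q => fderiv ℝ (comp3 A k) q (EuclideanSpace.single j 1))
        ((ContinuousLinearMap.apply ℝ ℝ (EuclideanSpace.single j 1)).comp
          (fderiv ℝ (fderiv ℝ (comp3 A k)) p)) p := by
      exact (ContinuousLinearMap.apply ℝ ℝ (EuclideanSpace.single j 1)).hasFDerivAt.comp p
        hd.hasFDerivAt
    exact h.differentiableAt
  refine ⟨?_, ?_, ?_⟩
  · -- geodesic: (DA)(A) = 0
    intro p hp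
    have hA : DifferentiableAt ℝ A p :=
      ((hC2 p hp).contDiffAt (hU.mem_nhds hp)).differentiableAt two_ne_zero
    have gen : ∀ i : Fin 3, EuclideanSpace.proj i (fderiv ℝ A p (A p))
        = comp3 A 0 p * pd3 0 (comp3 A i) p + comp3 A 1 p * pd3 1 (comp3 A i) p
          + comp3 A 2 p * pd3 2 (comp3 A i) p := by
      intro i
      have hcmp : HasFDerivAt (comp3 A i)
          ((EuclideanSpace.proj i : E3 →L[ℝ] ℝ).comp (fderiv ℝ A p)) p := by
        exact (EuclideanSpace.proj i : E3 →L[ℝ] ℝ).hasFDerivAt.comp p hA.hasFDerivAt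
      have h1 : EuclideanSpace.proj i (fderiv ℝ A p (A p)) = fderiv ℝ (comp3 A i) p (A p) := by
        rw [hcmp.fderiv]; rfl
      have h2 : ∀ j : Fin 3, EuclideanSpace.proj j (A p) = comp3 A j p := fun j => rfl
      rw [h1, fderiv_apply3, h2 0, h2 1, h2 2]
    obtain ⟨hc0, hc1, hc2⟩ := hcurlc p hp
    have key0 : EuclideanSpace.proj (0 : Fin 3) (fderiv ℝ A p (A p)) = 0 := by
      rw [gen 0]
      have hu0 := hUnitD p hp 0
      linear_combination hu0 - comp3 A 1 p * hc2 + comp3 A 2 p * hc1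
    have key1 : EuclideanSpace.proj (1 : Fin 3) (fderiv ℝ A p (A p)) = 0 := by
      rw [gen 1]
      have hu1 := hUnitD p hp 1
      linear_combination hu1 + comp3 A 0 p * hc2 - comp3 A 2 p * hc0
    have key2 : EuclideanSpace.proj (2 : Fin 3) (fderiv ℝ A p (A p)) = 0 := by
      rw [gen 2]
      have hu2 := hUnitD p hp 2
      linear_combination hu2 - comp3 A 0 p * hc1 + comp3 A 1 p * hc0
    ext i
    fin_cases i
    · exact key0
    · exact key1
    · exact key2
  · -- divergence-free
    intro p hp
    have h2lam : (2 : ℝ) * lam ≠ 0 := mul_ne_zero two_ne_zero hlam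
    have keyd : ∀ (i j k a b : Fin 3),
        (∀ q ∈ U, pd3 a (comp3 A b) q - pd3 j (comp3 A k) q = 2 * lam * comp3 A i q) →
        2 * lam * pd3 i (comp3 A i) p
          = pd3 i (pd3 a (comp3 A b)) p - pd3 i (pd3 j (comp3 A k)) p := by
      intro i j k a b heq
      have hev : (fun q => pd3 a (comp3 A b) q - pd3 j (comp3 A k) q)
          =ᶠ[nhds p] (fun q => 2 * lam * comp3 A i q) := by
        filter_upwards [hU.mem_nhds hp] with q hq using heq q hq
      have hL : fderiv ℝ (fun q => pd3 a (comp3 A b) q - pd3 j (comp3 A k) q) p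
          (EuclideanSpace.single i 1)
          = pd3 i (pd3 a (comp3 A b)) p - pd3 i (pd3 j (comp3 A k)) p := by
        rw [fderiv_fun_sub (hpdDiff a b p hp) (hpdDiff j k p hp)]
        rfl
      have hR : fderiv ℝ (fun q => 2 * lam * comp3 A i q) p (EuclideanSpace.single i 1)
          = 2 * lam * pd3 i (comp3 A i) p := by
        rw [fderiv_const_mul (hdiffAt i p hp)]
        simp [pd3]
      rw [← hR, ← hev.fderiv_eq, hL]
    have k0 := keyd 0 2 1 1 2 (fun q hq => (hcurlc q hq).1)
    have k1 := keyd 1 0 2 2 0 (fun q hq => (hcurlc q hq).2.1)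
    have k2 := keyd 2 1 0 0 1 (fun q hq => (hcurlc q hq).2.2)
    have s0 := pd3_symm (hcompAt 0 p hp) 1 2
    have s1 := pd3_symm (hcompAt 1 p hp) 2 0
    have s2 := pd3_symm (hcompAt 2 p hp) 0 1
    have hsum : 2 * lam * div3 A p = 0 := by
      rw [div3]; linarith
    have := mul_eq_zero.mp hsum
    rcases this with h | h
    · exact absurd h h2lam
    · exact h
  · -- twist
    intro p hp
    rw [hadapted p hp, norm_smul, hunit p hp]
    simp [abs_mul]

end
end

section
/- (Theorem 3.1, converse direction, for the Euclidean metric.) Let λ > 0, let U ⊆ ℝ³ be open and connected, and let A : U → ℝ³ be twice continuously differentiable with ‖A(p)‖ = 1, (D A)(p)(A(p)) = 0 (geodesic congruence), and ‖curl A(p)‖ = 2λ (constant nonzero twist) for all p ∈ U. Then either curl A = 2λ A on all of U or curl A = −2λ A on all of U (so the dual 1-form of A or of −A is an adapted contact form with dα = 2λ∗α), and moreover div A = 0 on U (the congruence is divergence-free). -/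
noncomputable section

/-! ### Auxiliary lemmas -/

lemma pd3_comp3 (A : E3 → E3) (p : E3) (hA : DifferentiableAt ℝ A p) (i j : Fin 3) :
    pd3 j (comp3 A i) p = fderiv ℝ A p (EuclideanSpace.single j 1) i := by
  have h : pd3 j (comp3 A i) p
      = fderiv ℝ ((EuclideanSpace.proj (𝕜 := ℝ) i) ∘ A) p (EuclideanSpace.single j 1) := rfl
  rw [h, fderiv_comp p (EuclideanSpace.proj i).differentiableAt hA, ContinuousLinearMap.fderiv]
  rfl

lemma clm_decomp {F : Type*} [NormedAddCommGroup F] [NormedSpace ℝ F] (L : E3 →L[ℝ] F) (v : E3) :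
    L v = v 0 • L (EuclideanSpace.single 0 1) + v 1 • L (EuclideanSpace.single 1 1)
      + v 2 • L (EuclideanSpace.single 2 1) := by
  have hv : v = v 0 • EuclideanSpace.single 0 (1:ℝ) + v 1 • EuclideanSpace.single 1 1
      + v 2 • EuclideanSpace.single 2 1 := by
    ext i; fin_cases i <;> simp [EuclideanSpace.single_apply]
  conv_lhs => rw [hv]
  simp

lemma fderiv_pd3 {f : E3 → ℝ} {U : Set E3} (hU : IsOpen U) (hf : ContDiffOn ℝ 2 f U)
    {p : E3} (hp : p ∈ U) (j : Fin 3) :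
    fderiv ℝ (pd3 j f) p
      = (ContinuousLinearMap.apply ℝ ℝ (EuclideanSpace.single j (1:ℝ))).comp
          (fderiv ℝ (fderiv ℝ f) p) := by
  have h1 : ContDiffOn ℝ 1 (fderiv ℝ f) U := hf.fderiv_of_isOpen hU (by norm_num)
  have h2 : DifferentiableAt ℝ (fderiv ℝ f) p :=
    (h1.differentiableOn one_ne_zero).differentiableAt (hU.mem_nhds hp)
  have h : pd3 j f
      = (ContinuousLinearMap.apply ℝ ℝ (EuclideanSpace.single j (1:ℝ))) ∘ fderiv ℝ f := rfl
  rw [h, fderiv_comp p (ContinuousLinearMap.apply ℝ ℝ _).differentiableAt h2,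
    ContinuousLinearMap.fderiv]

lemma pd3_diff {f : E3 → ℝ} {U : Set E3} (hU : IsOpen U) (hf : ContDiffOn ℝ 2 f U)
    {p : E3} (hp : p ∈ U) (j : Fin 3) : DifferentiableAt ℝ (pd3 j f) p := by
  have h1 : ContDiffOn ℝ 1 (fderiv ℝ f) U := hf.fderiv_of_isOpen hU (by norm_num)
  have h2 : DifferentiableAt ℝ (fderiv ℝ f) p :=
    (h1.differentiableOn one_ne_zero).differentiableAt (hU.mem_nhds hp)
  exact (ContinuousLinearMap.apply ℝ ℝ (EuclideanSpace.single j 1)).differentiableAt.comp p h2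

lemma pd3_symm_s4 {f : E3 → ℝ} {U : Set E3} (hU : IsOpen U) (hf : ContDiffOn ℝ 2 f U)
    {p : E3} (hp : p ∈ U) (i j : Fin 3) : pd3 i (pd3 j f) p = pd3 j (pd3 i f) p := by
  have hsymm : IsSymmSndFDerivAt ℝ f p :=
    (hf.contDiffAt (hU.mem_nhds hp)).isSymmSndFDerivAt (by simp [minSmoothness_of_isRCLikeNormedField])
  have e1 : pd3 i (pd3 j f) p
      = fderiv ℝ (fderiv ℝ f) p (EuclideanSpace.single i 1) (EuclideanSpace.single j 1) := by
    rw [pd3, fderiv_pd3 hU hf hp]; rfl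
  have e2 : pd3 j (pd3 i f) p
      = fderiv ℝ (fderiv ℝ f) p (EuclideanSpace.single j 1) (EuclideanSpace.single i 1) := by
    rw [pd3, fderiv_pd3 hU hf hp]; rfl
  rw [e1, e2, hsymm]

lemma pd3_contOn {f : E3 → ℝ} {U : Set E3} (hU : IsOpen U) (hf : ContDiffOn ℝ 2 f U)
    (j : Fin 3) : ContinuousOn (pd3 j f) U :=
  (ContinuousLinearMap.apply ℝ ℝ (EuclideanSpace.single j (1:ℝ))).continuous.comp_continuousOn
    (hf.continuousOn_fderiv_of_isOpen hU (by norm_num))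

lemma contDiffOn_comp3 {A : E3 → E3} {U : Set E3} (hA : ContDiffOn ℝ 2 A U) (i : Fin 3) :
    ContDiffOn ℝ 2 (comp3 A i) U :=
  (EuclideanSpace.proj (𝕜 := ℝ) i).contDiff.comp_contDiffOn hA

lemma alg3 (a0 a1 a2 g00 g01 g02 g10 g11 g12 g20 g21 g22 : ℝ)
    (hN : a0^2 + a1^2 + a2^2 = 1)
    (hG0 : a0*g00 + a1*g01 + a2*g02 = 0)
    (hG1 : a0*g10 + a1*g11 + a2*g12 = 0)
    (hG2 : a0*g20 + a1*g21 + a2*g22 = 0)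
    (hH0 : a0*g00 + a1*g10 + a2*g20 = 0)
    (hH1 : a0*g01 + a1*g11 + a2*g21 = 0)
    (hH2 : a0*g02 + a1*g12 + a2*g22 = 0) :
    g21 - g12 = ((g21-g12)*a0 + (g02-g20)*a1 + (g10-g01)*a2) * a0 ∧
    g02 - g20 = ((g21-g12)*a0 + (g02-g20)*a1 + (g10-g01)*a2) * a1 ∧
    g10 - g01 = ((g21-g12)*a0 + (g02-g20)*a1 + (g10-g01)*a2) * a2 := by
  have hx0 : (g02-g20)*a2 - (g10-g01)*a1 = 0 := by linear_combination hG0 - hH0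
  have hx1 : (g10-g01)*a0 - (g21-g12)*a2 = 0 := by linear_combination hG1 - hH1
  have hx2 : (g21-g12)*a1 - (g02-g20)*a0 = 0 := by linear_combination hG2 - hH2
  refine ⟨?_, ?_, ?_⟩
  · linear_combination (-(g21-g12))*hN - a2*hx1 + a1*hx2
  · linear_combination (-(g02-g20))*hN + a2*hx0 - a0*hx2
  · linear_combination (-(g10-g01))*hN + a0*hx1 - a1*hx0

/-- Theorem 3.1, converse direction, for the Euclidean metric: a unit vector field whose integral
curves form a geodesic congruence of constant nonzero twist `λ` satisfies `curl A = ±2λA`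
(so `A` or `-A` is dual to an adapted contact form), and is divergence-free. -/
theorem stmt4 (lam : ℝ) (hlam : 0 < lam) (U : Set E3) (hU : IsOpen U)
    (hconn : IsConnected U) (A : E3 → E3)
    (hC2 : ContDiffOn ℝ 2 A U)
    (hunit : ∀ p ∈ U, ‖A p‖ = 1)
    (hgeo : ∀ p ∈ U, fderiv ℝ A p (A p) = 0)
    (htwist : ∀ p ∈ U, ‖curl3 A p‖ = 2 * lam) :
    ((∀ p ∈ U, curl3 A p = (2 * lam) • A p) ∨
      (∀ p ∈ U, curl3 A p = (-(2 * lam)) • A p)) ∧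
    (∀ p ∈ U, div3 A p = 0) := by
  -- the "twist function"
  set fval : E3 → ℝ := fun p =>
      (pd3 1 (comp3 A 2) p - pd3 2 (comp3 A 1) p) * comp3 A 0 p
    + (pd3 2 (comp3 A 0) p - pd3 0 (comp3 A 2) p) * comp3 A 1 p
    + (pd3 0 (comp3 A 1) p - pd3 1 (comp3 A 0) p) * comp3 A 2 p with hfval
  -- curl is pointwise parallel to A
  have hpar : ∀ p ∈ U, curl3 A p = fval p • A p := by
    intro p hp
    have hdA : DifferentiableAt ℝ A p :=
      (hC2.differentiableOn (by norm_num)).differentiableAt (hU.mem_nhds hp)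
    have hN : (A p 0)^2 + (A p 1)^2 + (A p 2)^2 = 1 := by
      have h := real_inner_self_eq_norm_sq (A p)
      rw [hunit p hp] at h
      simp only [PiLp.inner_apply, Fin.sum_univ_three, RCLike.inner_apply, conj_trivial,
        one_pow] at h
      nlinarith [h]
    -- geodesic relations
    have hG : ∀ i : Fin 3,
        A p 0 * pd3 0 (comp3 A i) p + A p 1 * pd3 1 (comp3 A i) p
          + A p 2 * pd3 2 (comp3 A i) p = 0 := by
      intro i
      have hL := clm_decomp ((EuclideanSpace.proj (𝕜 := ℝ) i).comp (fderiv ℝ A p)) (A p)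
      simp only [ContinuousLinearMap.coe_comp', Function.comp_apply, hgeo p hp,
        smul_eq_mul] at hL
      have hz : EuclideanSpace.proj (𝕜 := ℝ) i (0 : E3) = 0 := by simp
      have hproj : ∀ v : E3, EuclideanSpace.proj (𝕜 := ℝ) i v = v i := fun _ => rfl
      rw [hz] at hL
      simp only [hproj] at hL
      rw [pd3_comp3 A p hdA i 0, pd3_comp3 A p hdA i 1, pd3_comp3 A p hdA i 2]
      linarith [hL]
    -- unit-norm relations
    have hH : ∀ j : Fin 3,
        A p 0 * pd3 j (comp3 A 0) p + A p 1 * pd3 j (comp3 A 1) p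
          + A p 2 * pd3 j (comp3 A 2) p = 0 := by
      intro j
      have hFconst : (fun x => (inner ℝ (A x) (A x) : ℝ)) =ᶠ[nhds p] fun _ => (1:ℝ) := by
        filter_upwards [hU.mem_nhds hp] with x hx
        have := real_inner_self_eq_norm_sq (A x)
        rw [hunit x hx] at this; simpa using this
      have h0 : fderiv ℝ (fun x => (inner ℝ (A x) (A x) : ℝ)) p = 0 := by
        rw [hFconst.fderiv_eq]; exact fderiv_const_apply 1
      have h1 := fderiv_inner_apply (𝕜 := ℝ) hdA hdA (EuclideanSpace.single j 1)
      rw [h0] at h1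
      simp only [ContinuousLinearMap.zero_apply, PiLp.inner_apply, Fin.sum_univ_three,
        RCLike.inner_apply, conj_trivial] at h1
      rw [pd3_comp3 A p hdA 0 j, pd3_comp3 A p hdA 1 j, pd3_comp3 A p hdA 2 j]
      nlinarith [h1]
    have halg := alg3 (A p 0) (A p 1) (A p 2)
      (pd3 0 (comp3 A 0) p) (pd3 1 (comp3 A 0) p) (pd3 2 (comp3 A 0) p)
      (pd3 0 (comp3 A 1) p) (pd3 1 (comp3 A 1) p) (pd3 2 (comp3 A 1) p)
      (pd3 0 (comp3 A 2) p) (pd3 1 (comp3 A 2) p) (pd3 2 (comp3 A 2) p)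
      hN (hG 0) (hG 1) (hG 2) (hH 0) (hH 1) (hH 2)
    have hcomp : ∀ i, comp3 A i p = A p i := fun _ => rfl
    ext i
    fin_cases i
    · show pd3 1 (comp3 A 2) p - pd3 2 (comp3 A 1) p = fval p * A p 0
      rw [hfval]; simp only [hcomp]
      linarith [halg.1]
    · show pd3 2 (comp3 A 0) p - pd3 0 (comp3 A 2) p = fval p * A p 1
      rw [hfval]; simp only [hcomp]
      linarith [halg.2.1]
    · show pd3 0 (comp3 A 1) p - pd3 1 (comp3 A 0) p = fval p * A p 2
      rw [hfval]; simp only [hcomp]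
      linarith [halg.2.2]
  -- |fval| = 2λ on U
  have habs : ∀ p ∈ U, |fval p| = 2 * lam := by
    intro p hp
    have := htwist p hp
    rw [hpar p hp, norm_smul, hunit p hp, mul_one] at this
    simpa using this
  have hsign : ∀ p ∈ U, fval p = 2 * lam ∨ fval p = -(2 * lam) := by
    intro p hp
    rcases abs_eq (by positivity : (0:ℝ) ≤ 2 * lam) |>.mp (habs p hp) with h | h
    · exact Or.inl h
    · exact Or.inr h
  -- continuity of fval on U
  have hcont : ContinuousOn fval U := by
    have hc : ∀ i j : Fin 3, ContinuousOn (pd3 j (comp3 A i)) U :=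
      fun i j => pd3_contOn hU (contDiffOn_comp3 hC2 i) j
    have ha : ∀ i : Fin 3, ContinuousOn (comp3 A i) U :=
      fun i => (EuclideanSpace.proj (𝕜 := ℝ) i).continuous.comp_continuousOn hC2.continuousOn
    exact ((((hc 2 1).sub (hc 1 2)).mul (ha 0)).add
      (((hc 0 2).sub (hc 2 0)).mul (ha 1))).add (((hc 1 0).sub (hc 0 1)).mul (ha 2))
  -- dichotomy on connected U
  have hdichot : (∀ p ∈ U, fval p = 2 * lam) ∨ (∀ p ∈ U, fval p = -(2 * lam)) := by
    by_cases h : ∀ p ∈ U, fval p = 2 * lam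
    · exact Or.inl h
    · push_neg at h
      obtain ⟨q, hq, hq2⟩ := h
      have hqneg : fval q = -(2 * lam) := (hsign q hq).resolve_left hq2
      right
      intro p hp
      by_contra hpne
      have hppos : fval p = 2 * lam := (hsign p hp).resolve_right hpne
      have hIVT := hconn.isPreconnected.intermediate_value hq hp hcont
      have h0mem : (0:ℝ) ∈ Set.Icc (fval q) (fval p) := by
        rw [hqneg, hppos]; constructor <;> nlinarith
      obtain ⟨z, hz, hz0⟩ := hIVT h0mem
      rcases hsign z hz with h | h <;> rw [hz0] at h <;> nlinarith
  -- divergence-free: general lemma for curl = c • A with c ≠ 0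
  have hdiv : ∀ c : ℝ, c ≠ 0 → (∀ p ∈ U, curl3 A p = c • A p) → ∀ p ∈ U, div3 A p = 0 := by
    intro c hc hcurl p hp
    have hdiffp : ∀ i j : Fin 3, DifferentiableAt ℝ (pd3 j (comp3 A i)) p :=
      fun i j => pd3_diff hU (contDiffOn_comp3 hC2 i) hp j
    -- comp3 of curl as explicit functions
    have hc0 : comp3 (curl3 A) 0 = fun x => pd3 1 (comp3 A 2) x - pd3 2 (comp3 A 1) x := by
      funext x; simp [comp3, curl3]
    have hc1 : comp3 (curl3 A) 1 = fun x => pd3 2 (comp3 A 0) x - pd3 0 (comp3 A 2) x := by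
      funext x; simp [comp3, curl3]
    have hc2 : comp3 (curl3 A) 2 = fun x => pd3 0 (comp3 A 1) x - pd3 1 (comp3 A 0) x := by
      funext x; simp [comp3, curl3]
    -- comp3 A i = c⁻¹ * comp3 (curl3 A) i near p
    have hd0 : DifferentiableAt ℝ (comp3 (curl3 A) 0) p := by
      rw [hc0]; exact (hdiffp 2 1).sub (hdiffp 1 2)
    have hd1 : DifferentiableAt ℝ (comp3 (curl3 A) 1) p := by
      rw [hc1]; exact (hdiffp 0 2).sub (hdiffp 2 0)
    have hd2 : DifferentiableAt ℝ (comp3 (curl3 A) 2) p := by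
      rw [hc2]; exact (hdiffp 1 0).sub (hdiffp 0 1)
    have hkey : ∀ i : Fin 3, DifferentiableAt ℝ (comp3 (curl3 A) i) p →
        pd3 i (comp3 A i) p = c⁻¹ * pd3 i (comp3 (curl3 A) i) p := by
      intro i hdcurl
      have hev : comp3 A i =ᶠ[nhds p] fun x => c⁻¹ * comp3 (curl3 A) i x := by
        filter_upwards [hU.mem_nhds hp] with x hx
        have h1 : comp3 (curl3 A) i x = c * comp3 A i x := by
          unfold comp3; rw [hcurl x hx]; rfl
        rw [h1]; field_simp
      rw [pd3, hev.fderiv_eq, fderiv_const_mul hdcurl]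
      rfl
    -- second derivatives cancel
    have hsum : pd3 0 (comp3 (curl3 A) 0) p + pd3 1 (comp3 (curl3 A) 1) p
        + pd3 2 (comp3 (curl3 A) 2) p = 0 := by
      have e0 : pd3 0 (comp3 (curl3 A) 0) p
          = pd3 0 (pd3 1 (comp3 A 2)) p - pd3 0 (pd3 2 (comp3 A 1)) p := by
        rw [hc0, pd3, fderiv_fun_sub (hdiffp 2 1) (hdiffp 1 2)]; rfl
      have e1 : pd3 1 (comp3 (curl3 A) 1) p
          = pd3 1 (pd3 2 (comp3 A 0)) p - pd3 1 (pd3 0 (comp3 A 2)) p := by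
        rw [hc1, pd3, fderiv_fun_sub (hdiffp 0 2) (hdiffp 2 0)]; rfl
      have e2 : pd3 2 (comp3 (curl3 A) 2) p
          = pd3 2 (pd3 0 (comp3 A 1)) p - pd3 2 (pd3 1 (comp3 A 0)) p := by
        rw [hc2, pd3, fderiv_fun_sub (hdiffp 1 0) (hdiffp 0 1)]; rfl
      rw [e0, e1, e2,
        pd3_symm_s4 hU (contDiffOn_comp3 hC2 2) hp 0 1,
        pd3_symm_s4 hU (contDiffOn_comp3 hC2 1) hp 0 2,
        pd3_symm_s4 hU (contDiffOn_comp3 hC2 0) hp 1 2]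
      ring
    rw [div3, hkey 0 hd0, hkey 1 hd1, hkey 2 hd2]
    rw [← mul_add, ← mul_add, hsum, mul_zero]
  rcases hdichot with h | h
  · have hcurl : ∀ p ∈ U, curl3 A p = (2 * lam) • A p := by
      intro p hp; rw [hpar p hp, h p hp]
    exact ⟨Or.inl hcurl, hdiv (2 * lam) (by positivity) hcurl⟩
  · have hcurl : ∀ p ∈ U, curl3 A p = (-(2 * lam)) • A p := by
      intro p hp; rw [hpar p hp, h p hp]
    refine ⟨Or.inr hcurl, hdiv (-(2 * lam)) (by nlinarith) hcurl⟩

end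
end

section
/- Let λ be a nonzero real number. A differentiable function f : ℝ → ℂ satisfies f'(r) = −iλ f(r) + λ · conj(f(r)) for all r ∈ ℝ if and only if there exist real numbers a₀ and b₀ such that f(r) = a₀ + (b₀/λ − a₀)·i + b₀·(1 − i)·r for all r ∈ ℝ. -/
open Complex

/-- General solution of the radial equation `f' = −iλ f + λ · conj f` for the frame coefficients
`Ω` and `ηᵃ` in the flat case of the spin-coefficient field equations. -/
theorem stmt6 (lam : ℝ) (hlam : lam ≠ 0) (f : ℝ → ℂ) (hf : Differentiable ℝ f) :
    (∀ r : ℝ, deriv f r = -(Complex.I * lam) * f r + (lam : ℂ) * (starRingEnd ℂ) (f r)) ↔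
      (∃ a₀ b₀ : ℝ, ∀ r : ℝ,
        f r = (a₀ : ℂ) + ((b₀ / lam : ℝ) - (a₀ : ℝ)) * Complex.I +
          (b₀ : ℂ) * (1 - Complex.I) * (r : ℂ)) := by
  have hlamC : (lam : ℂ) ≠ 0 := Complex.ofReal_ne_zero.mpr hlam
  constructor
  · intro hode
    -- g = f + I * conj f is constant
    set g : ℝ → ℂ := fun r => f r + Complex.I * (starRingEnd ℂ) (f r) with hg
    have hgdiff : Differentiable ℝ g := by
      intro r
      exact ((hf r).hasDerivAt.add
        (((hf r).hasDerivAt.star).const_mul Complex.I)).differentiableAt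
    have hgderiv : ∀ r, deriv g r = 0 := by
      intro r
      have h1 : HasDerivAt g (deriv f r + Complex.I * (starRingEnd ℂ) (deriv f r)) r :=
        (hf r).hasDerivAt.add (((hf r).hasDerivAt.star).const_mul Complex.I)
      rw [h1.deriv, hode r]
      simp only [map_add, map_mul, map_neg, Complex.conj_I, Complex.conj_ofReal,
        Complex.conj_conj]
      linear_combination ((lam : ℂ) * (starRingEnd ℂ) (f r)) * Complex.I_sq
    have hgconst : ∀ r, g r = g 0 := fun r => is_const_of_deriv_eq_zero hgdiff hgderiv r 0
    -- hence deriv f is the constant -I * lam * g 0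
    set c : ℂ := -(Complex.I * lam) * g 0 with hc
    have hfderiv : ∀ r, deriv f r = c := by
      intro r
      have h2 : Complex.I * (starRingEnd ℂ) (f r) = g 0 - f r := by
        rw [← hgconst r]; ring
      have h3 : (starRingEnd ℂ) (f r) = -Complex.I * (g 0 - f r) := by
        linear_combination (-Complex.I) * h2 + (starRingEnd ℂ) (f r) * Complex.I_sq
      rw [hode r, h3, hc]
      ring
    -- so f is affine: f r = f 0 + c * r
    have haffine : ∀ r : ℝ, f r = f 0 + c * r := by
      intro r
      have hdiff2 : Differentiable ℝ (fun r : ℝ => f r - c * r) := by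
        intro x
        exact ((hf x).hasDerivAt.sub
          (((hasDerivAt_id x).ofReal_comp).const_mul c)).differentiableAt
      have hderiv2 : ∀ x : ℝ, deriv (fun r : ℝ => f r - c * r) x = 0 := by
        intro x
        have h4 : HasDerivAt (fun r : ℝ => f r - c * r) (deriv f x - c * 1) x :=
          (hf x).hasDerivAt.sub (((hasDerivAt_id x).ofReal_comp).const_mul c)
        rw [h4.deriv, hfderiv x]; ring
      have := is_const_of_deriv_eq_zero hdiff2 hderiv2 r 0
      simp only [Complex.ofReal_zero, mul_zero, sub_zero] at this
      linear_combination this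
    obtain ⟨u, v, hf0⟩ : ∃ u v : ℝ, f 0 = (u : ℂ) + (v : ℂ) * Complex.I :=
      ⟨(f 0).re, (f 0).im, (Complex.re_add_im (f 0)).symm⟩
    refine ⟨u, lam * (u + v), fun r => ?_⟩
    have hdiv : (lam * (u + v)) / lam = u + v := by field_simp
    have hconj : (starRingEnd ℂ) (f 0) = (u : ℂ) - (v : ℂ) * Complex.I := by
      rw [hf0, map_add, map_mul, Complex.conj_ofReal, Complex.conj_ofReal, Complex.conj_I]
      ring
    rw [haffine r, hdiv, hc, hg]
    simp only []
    rw [hconj, hf0]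
    push_cast
    linear_combination ((r : ℂ) * lam * (Complex.I * v - u - v)) * Complex.I_sq
  · rintro ⟨a₀, b₀, hsol⟩ r
    have hfr : f = fun r : ℝ => (a₀ : ℂ) + ((b₀ / lam : ℝ) - (a₀ : ℝ)) * Complex.I +
        (b₀ : ℂ) * (1 - Complex.I) * (r : ℂ) := funext hsol
    have hd : HasDerivAt f ((b₀ : ℂ) * (1 - Complex.I)) r := by
      rw [hfr]
      simpa using (((hasDerivAt_id r).ofReal_comp).const_mul
        ((b₀ : ℂ) * (1 - Complex.I))).const_add
        ((a₀ : ℂ) + ((b₀ / lam : ℝ) - (a₀ : ℝ)) * Complex.I)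
    rw [hd.deriv, hsol r]
    simp only [map_add, map_mul, map_sub, map_one, Complex.conj_ofReal, Complex.conj_I]
    push_cast
    field_simp
    linear_combination ((b₀ - b₀ * lam * r - lam * a₀ : ℂ)) * Complex.I_sq
end

section
/- Fix real numbers u and k, let s = √(1 + u²), and define F : ℝ → ℝ by F(v) = −(1/√2)·[ v/(1+u²) + ((1+u²+v²)/(1+u²)^{3/2})·arctan(v/√(1+u²)) + k·(1+u²+v²) ]. Then F is differentiable and satisfies the ordinary differential equation (1/2)·(1 + u² + v²)·F'(v) − v·F(v) = −1/√2 for all v ∈ ℝ. -/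
open Real

/-- Explicit solution `Ω₀` of the equation `(1/2)(1+u²+v²)Ω₀' − vΩ₀ = −1/√2` in the elliptic
case of the spin-coefficient field equations. -/
theorem stmt9 (u k : ℝ)
    (F : ℝ → ℝ)
    (hF : ∀ v : ℝ, F v = -(1 / Real.sqrt 2) *
      (v / (1 + u ^ 2) +
        ((1 + u ^ 2 + v ^ 2) / (1 + u ^ 2) ^ ((3 : ℝ) / 2)) *
          Real.arctan (v / Real.sqrt (1 + u ^ 2)) +
        k * (1 + u ^ 2 + v ^ 2))) :
    Differentiable ℝ F ∧
    ∀ v : ℝ, (1 / 2) * (1 + u ^ 2 + v ^ 2) * deriv F v - v * F v = -(1 / Real.sqrt 2) := by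
  have ha : (0:ℝ) < 1 + u ^ 2 := by positivity
  set a : ℝ := 1 + u ^ 2 with ha_def
  clear_value a
  have hsa : 0 < Real.sqrt a := Real.sqrt_pos.mpr ha
  have hsq : Real.sqrt a * Real.sqrt a = a := Real.mul_self_sqrt ha.le
  have h32 : a ^ ((3:ℝ)/2) = a * Real.sqrt a := by
    rw [show (3:ℝ)/2 = 1 + 1/2 by norm_num, Real.rpow_add ha, Real.rpow_one,
      ← Real.sqrt_eq_rpow]
  have hF' : F = fun x : ℝ => -(1 / Real.sqrt 2) *
      (x / a + ((a + x ^ 2) / (a * Real.sqrt a)) * Real.arctan (x / Real.sqrt a)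
        + k * (a + x ^ 2)) := by
    funext x
    rw [hF x, h32]
  have hd : ∀ v : ℝ, HasDerivAt F
      (-(1 / Real.sqrt 2) * (2 / a +
        (2 * v / (a * Real.sqrt a)) * Real.arctan (v / Real.sqrt a) + 2 * k * v)) v := by
    intro v
    have hav : (0:ℝ) < a + v ^ 2 := by nlinarith [sq_nonneg v]
    have harc : HasDerivAt (fun x : ℝ => Real.arctan (x / Real.sqrt a))
        (Real.sqrt a / (a + v ^ 2)) v := by
      have h1 := (Real.hasDerivAt_arctan (v / Real.sqrt a)).comp v
        ((hasDerivAt_id v).div_const (Real.sqrt a))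
      refine h1.congr_deriv (Eq.symm ?_)
      have hvp : (v / Real.sqrt a) ^ 2 = v ^ 2 / a := by
        rw [div_pow, sq (Real.sqrt a), hsq]
      rw [hvp]
      field_simp
      linear_combination hsq
    have h2 : HasDerivAt (fun x : ℝ => a + x ^ 2) (2 * v) v := by
      simpa using (hasDerivAt_pow 2 v).const_add a
    have h3 : HasDerivAt (fun x : ℝ => (a + x ^ 2) / (a * Real.sqrt a))
        (2 * v / (a * Real.sqrt a)) v := h2.div_const _
    have h4 := h3.mul harc
    have h1 : HasDerivAt (fun x : ℝ => x / a) (1 / a) v := by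
      simpa using (hasDerivAt_id v).div_const a
    have h5 : HasDerivAt (fun x : ℝ => k * (a + x ^ 2)) (k * (2 * v)) v := h2.const_mul k
    have htot := ((h1.add h4).add h5).const_mul (-(1 / Real.sqrt 2))
    rw [hF']
    refine htot.congr_deriv (Eq.symm ?_)
    have hc : (a + v ^ 2) / (a * Real.sqrt a) * (Real.sqrt a / (a + v ^ 2)) = 1 / a := by
      rw [div_mul_div_comm, div_eq_div_iff (by positivity) ha.ne']
      ring
    rw [hc]
    ring
  refine ⟨fun v => (hd v).differentiableAt, fun v => ?_⟩
  rw [(hd v).deriv, hF v, h32]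
  have hav : (0:ℝ) < a + v ^ 2 := by nlinarith [sq_nonneg v]
  have h2 : (0:ℝ) < Real.sqrt 2 := by positivity
  field_simp
  ring
end

section
/- (Elliptic case: second explicit coordinate transformation.) Define, on the open set V = {(ρ,θ,φ) : ρ ∈ (0,π), θ ∈ (0, π/2)} ⊆ ℝ³, the map χ(ρ,θ,φ) = (ρ̃, θ̃, φ̃) by ρ̃ = arctan( cos ρ / (sin ρ · cos θ) ), θ̃ = arccos( √(cos²ρ + sin²ρ·cos²θ) ), φ̃ = arctan( cos ρ / (sin ρ · cos θ) ) − φ. Then for every q = (ρ,θ,φ) ∈ V, every λ > 0, and every tangent vector w = (w₁,w₂,w₃) ∈ ℝ³, the quadratic form Q_{(ρ̃,θ̃,φ̃)}(v) = (1/λ²)·[ v₁² + v₂² + sin²θ̃·(v₃² − 2·v₃·v₁) ] pulled back by χ equals the round metric: Q_{χ(q)}( Dχ(q)·w ) = (1/λ²)·[ w₁² + sin²ρ·( w₂² + sin²θ·w₃² ) ]. -/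
open Real

set_option maxHeartbeats 1600000

noncomputable section

/-- The coordinate transformation `χ(ρ,θ,φ) = (ρ̃,θ̃,φ̃)` of the elliptic case. -/
def chiMap (q : ℝ × ℝ × ℝ) : ℝ × ℝ × ℝ :=
  (Real.arctan (Real.cos q.1 / (Real.sin q.1 * Real.cos q.2.1)),
   Real.arccos (Real.sqrt (Real.cos q.1 ^ 2 + Real.sin q.1 ^ 2 * Real.cos q.2.1 ^ 2)),
   Real.arctan (Real.cos q.1 / (Real.sin q.1 * Real.cos q.2.1)) - q.2.2)

abbrev PP1 : (ℝ × ℝ × ℝ) →L[ℝ] ℝ := ContinuousLinearMap.fst ℝ ℝ (ℝ × ℝ)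
abbrev PP2 : (ℝ × ℝ × ℝ) →L[ℝ] ℝ :=
  (ContinuousLinearMap.fst ℝ ℝ ℝ).comp (ContinuousLinearMap.snd ℝ ℝ (ℝ × ℝ))
abbrev PP3 : (ℝ × ℝ × ℝ) →L[ℝ] ℝ :=
  (ContinuousLinearMap.snd ℝ ℝ ℝ).comp (ContinuousLinearMap.snd ℝ ℝ (ℝ × ℝ))

theorem chi_deriv (q : ℝ × ℝ × ℝ) (h1 : q.1 ∈ Set.Ioo 0 Real.pi)
    (h2 : q.2.1 ∈ Set.Ioo 0 (Real.pi / 2)) :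
    HasFDerivAt chiMap
      ((((-(Real.cos q.2.1 / (Real.cos q.1 ^ 2 + Real.sin q.1 ^ 2 * Real.cos q.2.1 ^ 2))) • PP1 +
          (Real.cos q.1 * Real.sin q.1 * Real.sin q.2.1 /
            (Real.cos q.1 ^ 2 + Real.sin q.1 ^ 2 * Real.cos q.2.1 ^ 2)) • PP2)).prod
        ((((Real.cos q.1 * Real.sin q.2.1 /
              Real.sqrt (Real.cos q.1 ^ 2 + Real.sin q.1 ^ 2 * Real.cos q.2.1 ^ 2)) • PP1 +
            (Real.sin q.1 * Real.cos q.2.1 /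
              Real.sqrt (Real.cos q.1 ^ 2 + Real.sin q.1 ^ 2 * Real.cos q.2.1 ^ 2)) • PP2)).prod
          (((-(Real.cos q.2.1 / (Real.cos q.1 ^ 2 + Real.sin q.1 ^ 2 * Real.cos q.2.1 ^ 2))) • PP1 +
            (Real.cos q.1 * Real.sin q.1 * Real.sin q.2.1 /
              (Real.cos q.1 ^ 2 + Real.sin q.1 ^ 2 * Real.cos q.2.1 ^ 2)) • PP2 - PP3)))) q := by
  obtain ⟨ρ, θ, φ⟩ := q
  dsimp only at h1 h2 ⊢
  set s := Real.sin ρ with hs_def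
  set c := Real.cos ρ with hc_def
  set ct := Real.cos θ with hct_def
  set st := Real.sin θ with hst_def
  have hs : 0 < s := Real.sin_pos_of_pos_of_lt_pi h1.1 h1.2
  have hct : 0 < ct := Real.cos_pos_of_mem_Ioo ⟨by linarith [h2.1, Real.pi_pos], h2.2⟩
  have hst : 0 < st := Real.sin_pos_of_pos_of_lt_pi h2.1 (by linarith [Real.pi_pos, h2.2])
  have hpyth1 : s ^ 2 + c ^ 2 = 1 := Real.sin_sq_add_cos_sq ρ
  have hpyth2 : st ^ 2 + ct ^ 2 = 1 := Real.sin_sq_add_cos_sq θ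
  have hA : 0 < c ^ 2 + s ^ 2 * ct ^ 2 := by nlinarith
  have hA1 : c ^ 2 + s ^ 2 * ct ^ 2 < 1 := by nlinarith [mul_pos (mul_pos hs hs) (mul_pos hst hst)]
  set A := c ^ 2 + s ^ 2 * ct ^ 2 with hA_def
  set r := Real.sqrt A with hr_def
  have hr : 0 < r := Real.sqrt_pos.2 hA
  have hr1 : r < 1 := by
    rw [hr_def, show (1:ℝ) = Real.sqrt 1 by simp]
    exact Real.sqrt_lt_sqrt hA.le hA1
  have hr2 : r ^ 2 = A := Real.sq_sqrt hA.le
  have hden : s * ct ≠ 0 := by positivity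
  -- derivatives of basic coordinate functions
  have hP1 : HasFDerivAt (fun p : ℝ × ℝ × ℝ => p.1) PP1 (ρ, θ, φ) := hasFDerivAt_fst
  have hP2 : HasFDerivAt (fun p : ℝ × ℝ × ℝ => p.2.1) PP2 (ρ, θ, φ) :=
    hasFDerivAt_fst.comp _ hasFDerivAt_snd
  have hP3 : HasFDerivAt (fun p : ℝ × ℝ × ℝ => p.2.2) PP3 (ρ, θ, φ) :=
    hasFDerivAt_snd.comp _ hasFDerivAt_snd
  have hcos1 : HasFDerivAt (fun p : ℝ × ℝ × ℝ => Real.cos p.1) ((-s) • PP1) (ρ, θ, φ) :=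
    by have := (Real.hasDerivAt_cos ρ).comp_hasFDerivAt (ρ, θ, φ) hP1; exact this
  have hsin1 : HasFDerivAt (fun p : ℝ × ℝ × ℝ => Real.sin p.1) (c • PP1) (ρ, θ, φ) :=
    by have := (Real.hasDerivAt_sin ρ).comp_hasFDerivAt (ρ, θ, φ) hP1; exact this
  have hcos2 : HasFDerivAt (fun p : ℝ × ℝ × ℝ => Real.cos p.2.1) ((-st) • PP2) (ρ, θ, φ) :=
    by have := (Real.hasDerivAt_cos θ).comp_hasFDerivAt (ρ, θ, φ) hP2; exact this
  -- derivative of the denominator sin ρ * cos θ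
  have hd := hsin1.mul hcos2
  -- derivative of its inverse
  have hinv := (hasDerivAt_inv hden).comp_hasFDerivAt (ρ, θ, φ) hd
  -- derivative of u = cos ρ * (sin ρ * cos θ)⁻¹
  have hu0 := hcos1.mul hinv
  have hu : HasFDerivAt (fun p : ℝ × ℝ × ℝ => Real.cos p.1 * (Real.sin p.1 * Real.cos p.2.1)⁻¹)
      ((-(1 / (s ^ 2 * ct))) • PP1 + (c * st / (s * ct ^ 2)) • PP2) (ρ, θ, φ) := by
    refine hu0.congr_fderiv ?_
    refine ContinuousLinearMap.ext fun w => ?_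
    simp only [ContinuousLinearMap.add_apply, ContinuousLinearMap.smul_apply,
      ContinuousLinearMap.sub_apply, ContinuousLinearMap.coe_comp', Function.comp_apply,
      ContinuousLinearMap.coe_fst', ContinuousLinearMap.coe_snd', smul_eq_mul,
      ContinuousLinearMap.prod_apply, Pi.mul_apply]
    try simp only [← hs_def, ← hc_def, ← hct_def, ← hst_def, ← hA_def, ← hr_def]
    field_simp
    linear_combination (-(ct * w.1)) * hpyth1
  -- derivative of arctan u
  have hf0 := (Real.hasDerivAt_arctan (c * (s * ct)⁻¹)).comp_hasFDerivAt (ρ, θ, φ) hu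
  have hf : HasFDerivAt
      (fun p : ℝ × ℝ × ℝ => Real.arctan (Real.cos p.1 * (Real.sin p.1 * Real.cos p.2.1)⁻¹))
      ((-(ct / A)) • PP1 + (c * s * st / A) • PP2) (ρ, θ, φ) := by
    refine hf0.congr_fderiv ?_
    refine ContinuousLinearMap.ext fun w => ?_
    simp only [ContinuousLinearMap.add_apply, ContinuousLinearMap.smul_apply,
      ContinuousLinearMap.sub_apply, ContinuousLinearMap.coe_comp', Function.comp_apply,
      ContinuousLinearMap.coe_fst', ContinuousLinearMap.coe_snd', smul_eq_mul,
      ContinuousLinearMap.prod_apply]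
    try simp only [← hs_def, ← hc_def, ← hct_def, ← hst_def, ← hA_def, ← hr_def]
    field_simp
    rw [hA_def]
    ring
  -- derivative of A-function
  have hAf : HasFDerivAt
      (fun p : ℝ × ℝ × ℝ => Real.cos p.1 ^ 2 + Real.sin p.1 ^ 2 * Real.cos p.2.1 ^ 2)
      ((-(2 * s * c * st ^ 2)) • PP1 + (-(2 * s ^ 2 * ct * st)) • PP2) (ρ, θ, φ) := by
    have h0 := (hcos1.mul hcos1).add ((hsin1.mul hsin1).mul (hcos2.mul hcos2))
    refine (h0.congr_of_eventuallyEq (Filter.Eventually.of_forall fun p => ?_)).congr_fderiv ?_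
    · simp only [Pi.add_apply, Pi.mul_apply]; ring
    · refine ContinuousLinearMap.ext fun w => ?_
      simp only [ContinuousLinearMap.add_apply, ContinuousLinearMap.smul_apply,
      ContinuousLinearMap.sub_apply, ContinuousLinearMap.coe_comp', Function.comp_apply,
      ContinuousLinearMap.coe_fst', ContinuousLinearMap.coe_snd', smul_eq_mul,
      ContinuousLinearMap.prod_apply, Pi.mul_apply]
      try simp only [← hs_def, ← hc_def, ← hct_def, ← hst_def, ← hA_def, ← hr_def]
      linear_combination (2 * s * c * w.1) * hpyth2
  -- derivative of sqrt A
  have hsq0 := (Real.hasDerivAt_sqrt hA.ne').comp_hasFDerivAt (ρ, θ, φ) hAf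
  -- derivative of arccos (sqrt A)
  have hg0 := (Real.hasDerivAt_arccos (by linarith : r ≠ -1) hr1.ne).comp_hasFDerivAt
    (ρ, θ, φ) hsq0
  have hsqrt1r : Real.sqrt (1 - r ^ 2) = s * st := by
    rw [hr2, show 1 - A = (s * st) ^ 2 by rw [hA_def]; nlinarith, Real.sqrt_sq (by positivity)]
  have hg : HasFDerivAt
      (fun p : ℝ × ℝ × ℝ =>
        Real.arccos (Real.sqrt (Real.cos p.1 ^ 2 + Real.sin p.1 ^ 2 * Real.cos p.2.1 ^ 2)))
      ((c * st / r) • PP1 + (s * ct / r) • PP2) (ρ, θ, φ) := by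
    refine hg0.congr_fderiv ?_
    refine ContinuousLinearMap.ext fun w => ?_
    simp only [ContinuousLinearMap.add_apply, ContinuousLinearMap.smul_apply,
      ContinuousLinearMap.sub_apply, ContinuousLinearMap.coe_comp', Function.comp_apply,
      ContinuousLinearMap.coe_fst', ContinuousLinearMap.coe_snd', smul_eq_mul,
      ContinuousLinearMap.prod_apply]
    try simp only [← hs_def, ← hc_def, ← hct_def, ← hst_def, ← hA_def, ← hr_def]
    rw [hsqrt1r]
    field_simp
    ring
  have hchi := hf.prodMk (hg.prodMk (hf.sub hP3))
  have hfun : chiMap = fun p : ℝ × ℝ × ℝ =>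
      (Real.arctan (Real.cos p.1 * (Real.sin p.1 * Real.cos p.2.1)⁻¹),
       Real.arccos (Real.sqrt (Real.cos p.1 ^ 2 + Real.sin p.1 ^ 2 * Real.cos p.2.1 ^ 2)),
       Real.arctan (Real.cos p.1 * (Real.sin p.1 * Real.cos p.2.1)⁻¹) - p.2.2) := by
    funext p; simp [chiMap, div_eq_mul_inv]
  rw [hfun]
  exact hchi

/-- Elliptic case, second explicit coordinate transformation: `χ` transforms the metric
`(1/λ²)[dρ̃² + dθ̃² + sin²θ̃(dφ̃² − 2dφ̃dρ̃)]` into the round metric of radius `1/λ`,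
`(1/λ²)[dρ² + sin²ρ(dθ² + sin²θ dφ²)]`. -/
theorem stmt13 :
    ∀ q : ℝ × ℝ × ℝ, q ∈ {q : ℝ × ℝ × ℝ | q.1 ∈ Set.Ioo 0 Real.pi ∧
        q.2.1 ∈ Set.Ioo 0 (Real.pi / 2)} →
      ∀ lam : ℝ, 0 < lam → ∀ w : ℝ × ℝ × ℝ,
        (1 / lam ^ 2) *
            ((fderiv ℝ chiMap q w).1 ^ 2 + (fderiv ℝ chiMap q w).2.1 ^ 2 +
              Real.sin (chiMap q).2.1 ^ 2 *
                ((fderiv ℝ chiMap q w).2.2 ^ 2 -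
                  2 * (fderiv ℝ chiMap q w).2.2 * (fderiv ℝ chiMap q w).1)) =
          (1 / lam ^ 2) *
            (w.1 ^ 2 + Real.sin q.1 ^ 2 * (w.2.1 ^ 2 + Real.sin q.2.1 ^ 2 * w.2.2 ^ 2)) := by
  rintro q ⟨h1, h2⟩ lam hlam w
  have hD := (chi_deriv q h1 h2).fderiv
  rw [hD]
  set s := Real.sin q.1 with hs_def
  set c := Real.cos q.1 with hc_def
  set ct := Real.cos q.2.1 with hct_def
  set st := Real.sin q.2.1 with hst_def
  have hs : 0 < s := Real.sin_pos_of_pos_of_lt_pi h1.1 h1.2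
  have hct : 0 < ct := Real.cos_pos_of_mem_Ioo ⟨by linarith [h2.1, Real.pi_pos], h2.2⟩
  have hst : 0 < st := Real.sin_pos_of_pos_of_lt_pi h2.1 (by linarith [Real.pi_pos, h2.2])
  have hpyth1 : s ^ 2 + c ^ 2 = 1 := Real.sin_sq_add_cos_sq q.1
  have hpyth2 : st ^ 2 + ct ^ 2 = 1 := Real.sin_sq_add_cos_sq q.2.1
  have hA : 0 < c ^ 2 + s ^ 2 * ct ^ 2 := by nlinarith
  have hA1 : c ^ 2 + s ^ 2 * ct ^ 2 < 1 := by nlinarith [mul_pos (mul_pos hs hs) (mul_pos hst hst)]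
  set A := c ^ 2 + s ^ 2 * ct ^ 2 with hA_def
  set r := Real.sqrt A with hr_def
  have hr : 0 < r := Real.sqrt_pos.2 hA
  have hr2 : r ^ 2 = A := Real.sq_sqrt hA.le
  have hsinchi : Real.sin (chiMap q).2.1 = s * st := by
    have : (chiMap q).2.1 = Real.arccos r := rfl
    rw [this, Real.sin_arccos,
      show 1 - r ^ 2 = (s * st) ^ 2 by rw [hr2, hA_def]; nlinarith,
      Real.sqrt_sq (by positivity)]
  rw [hsinchi]
  simp only [ContinuousLinearMap.prod_apply, ContinuousLinearMap.add_apply,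
    ContinuousLinearMap.sub_apply, ContinuousLinearMap.smul_apply,
    ContinuousLinearMap.coe_comp', Function.comp_apply,
    ContinuousLinearMap.coe_fst', ContinuousLinearMap.coe_snd', smul_eq_mul]
  congr 1
  have hSA : (s * st) ^ 2 = 1 - A := by rw [hA_def]; nlinarith [hpyth1, hpyth2]
  have hXY : (c * s * st * w.2.1 - ct * w.1) ^ 2 + (c * st * w.1 + s * ct * w.2.1) ^ 2
      = A * (w.1 ^ 2 + s ^ 2 * w.2.1 ^ 2) := by
    rw [hA_def]
    linear_combination (-(ct ^ 2 * (w.1 ^ 2 + s ^ 2 * w.2.1 ^ 2))) * hpyth1 +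
      (c ^ 2 * (w.1 ^ 2 + s ^ 2 * w.2.1 ^ 2)) * hpyth2
  have hv1 : -(ct / A) * w.1 + c * s * st / A * w.2.1 = (c * s * st * w.2.1 - ct * w.1) / A := by
    ring
  have hv2 : c * st / r * w.1 + s * ct / r * w.2.1 = (c * st * w.1 + s * ct * w.2.1) / r := by
    ring
  have e1 : ((c * s * st * w.2.1 - ct * w.1) / A - w.2.2) ^ 2 -
      2 * ((c * s * st * w.2.1 - ct * w.1) / A - w.2.2) * ((c * s * st * w.2.1 - ct * w.1) / A)
      = w.2.2 ^ 2 - ((c * s * st * w.2.1 - ct * w.1) / A) ^ 2 := by ring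
  rw [hv1, hv2, e1, div_pow, div_pow, hr2, hSA]
  have hAne : A ≠ 0 := ne_of_gt hA
  have hSA' : s ^ 2 * st ^ 2 = 1 - A := by linear_combination hSA
  field_simp
  linear_combination A * hXY + (-(A ^ 2 * w.2.2 ^ 2)) * hSA'

end
end
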